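/- arXiv:2601.06298 — 2 statements merged into one kernel-verified Lean document; each statement's English description precedes it below -/
import Mathlib

section
/- Let A and B be commuting n×n complex matrices with A Hermitian, A² = I, and B Hermitian, and let t ≥ 0. Then the average over s = ±1 of the conjugations by e^{is√t AB} admits the decomposition: (1/2)Σ_{s=±1} e^{is√t AB} ρ e^{-is√t AB} = Σ_{γ∈{0,1}} A^γ ⟨γ| e^{i√t B⊗Z} (ρ ⊗ |+⟩⟨+|) e^{-i√t B⊗Z} |γ⟩ A^γ, where the inner product ⟨γ|·|γ⟩ denotes the partial contraction over the ancilla qubit against the X-eigenstate |γ⟩ = Z^γ|+⟩. -/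
open Matrix NormedSpace Kronecker

/-- Pauli X matrix. -/
def pauliX : Matrix (Fin 2) (Fin 2) ℂ := !![0, 1; 1, 0]

/-- Pauli Z matrix. -/
def pauliZ : Matrix (Fin 2) (Fin 2) ℂ := !![1, 0; 0, -1]

/-- The `+1` eigenstate of Pauli X, `|+⟩ = (|0⟩+|1⟩)/√2`. -/
noncomputable def ketPlus : Fin 2 → ℂ := fun _ => ((Real.sqrt 2)⁻¹ : ℝ)

/-- `|γ⟩ = Z^γ |+⟩`, the eigenstate of X with eigenvalue `(-1)^γ`. -/
noncomputable def ketGamma (γ : Fin 2) : Fin 2 → ℂ := (pauliZ ^ (γ : ℕ)) *ᵥ ketPlus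

/-- `|+⟩⟨+|` as a matrix. -/
noncomputable def plusProj : Matrix (Fin 2) (Fin 2) ℂ :=
  vecMulVec ketPlus (fun j => star (ketPlus j))

/-- Partial contraction `(id ⊗ ⟨v|) M (id ⊗ |v⟩)` of an operator on `ℂⁿ ⊗ ℂ²`. -/
noncomputable def ancillaContract {n : ℕ} (v : Fin 2 → ℂ)
    (M : Matrix (Fin n × Fin 2) (Fin n × Fin 2) ℂ) : Matrix (Fin n) (Fin n) ℂ :=
  fun i j => ∑ a : Fin 2, ∑ b : Fin 2, star (v a) * M (i, a) (j, b) * v b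

open Nat in
lemma exp_proj_mul' {𝔸 : Type*} [NormedRing 𝔸] [NormedAlgebra ℂ 𝔸] [CompleteSpace 𝔸]
    (P M : 𝔸) (hP : P * P = P) (hPM : P * M = M * P) :
    exp (P * M) = 1 + P * (exp M - 1) := by
  have c : Commute P M := hPM
  have hPn : ∀ k : ℕ, P ^ (k + 1) = P := by
    intro k; induction k with
    | zero => simp
    | succ k ih => rw [pow_succ, ih, hP]
  have key : ∀ n : ℕ, (n ! : ℂ)⁻¹ • (P * M) ^ n
      = P * ((n ! : ℂ)⁻¹ • M ^ n) + (if n = 0 then 1 - P else 0) := by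
    intro n
    cases n with
    | zero => simp
    | succ k =>
      rw [c.mul_pow, hPn, if_neg (Nat.succ_ne_zero k), add_zero, mul_smul_comm]
  have hs : Summable (fun n : ℕ => (n ! : ℂ)⁻¹ • M ^ n) := expSeries_summable' (𝕂 := ℂ) M
  have hs1 : Summable (fun n : ℕ => P * ((n ! : ℂ)⁻¹ • M ^ n)) := hs.mul_left P
  have hs2 : Summable (fun n : ℕ => if n = 0 then (1 - P : 𝔸) else 0) :=
    summable_of_ne_finset_zero (s := {0}) (by intro n hn; simp at hn; simp [hn])
  simp only [exp_eq_tsum (𝕂 := ℂ)]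
  calc ∑' n : ℕ, (n ! : ℂ)⁻¹ • (P * M) ^ n
      = ∑' n : ℕ, (P * ((n ! : ℂ)⁻¹ • M ^ n) + (if n = 0 then 1 - P else 0)) :=
        tsum_congr key
    _ = (∑' n : ℕ, P * ((n ! : ℂ)⁻¹ • M ^ n)) + ∑' n : ℕ, (if n = 0 then (1 - P : 𝔸) else 0) :=
        Summable.tsum_add hs1 hs2
    _ = P * (∑' n : ℕ, (n ! : ℂ)⁻¹ • M ^ n) + (1 - P) := by
        rw [hs.tsum_mul_left, tsum_ite_eq]
    _ = 1 + P * ((∑' n : ℕ, (n ! : ℂ)⁻¹ • M ^ n) - 1) := by noncomm_ring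

lemma exp_decomp {n : ℕ} (A B : Matrix (Fin n) (Fin n) ℂ)
    (hAB : A * B = B * A) (hA2 : A ^ 2 = 1) (x : ℂ) :
    exp (x • (A * B)) =
      ((1/2 : ℂ) • (1 + A)) * exp (x • B) + ((1/2 : ℂ) • (1 - A)) * exp ((-x) • B) := by
  letI : SeminormedRing (Matrix (Fin n) (Fin n) ℂ) := Matrix.linftyOpSemiNormedRing
  letI : NormedRing (Matrix (Fin n) (Fin n) ℂ) := Matrix.linftyOpNormedRing
  letI : NormedAlgebra ℂ (Matrix (Fin n) (Fin n) ℂ) := Matrix.linftyOpNormedAlgebra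
  have hAA : A * A = 1 := by rw [← pow_two]; exact hA2
  set P : Matrix (Fin n) (Fin n) ℂ := (1/2 : ℂ) • (1 + A) with hPdef
  set Q : Matrix (Fin n) (Fin n) ℂ := (1/2 : ℂ) • (1 - A) with hQdef
  have cAB : Commute A B := hAB
  have cuB : Commute (1 + A) B := (Commute.one_left B).add_left cAB
  have cvB : Commute (1 - A) B := (Commute.one_left B).sub_left cAB
  have cuv : Commute (1 + A) (1 - A) :=
    (Commute.one_right (1 + A)).sub_right ((Commute.one_left A).add_left (Commute.refl A))
  have cPB : Commute P (x • B) := ((cuB.smul_left _).smul_right _)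
  have cQB : Commute Q ((-x) • B) := ((cvB.smul_left _).smul_right _)
  have hPP : P * P = P := by
    have h1 : (1 + A) * (1 + A) = (2:ℂ) • (1 + A) := by
      have h : (1 + A) * (1 + A) = 1 + A + (A + A * A) := by noncomm_ring
      rw [h, hAA]; module
    rw [hPdef, smul_mul_smul_comm, h1]; module
  have hQQ : Q * Q = Q := by
    have h1 : (1 - A) * (1 - A) = (2:ℂ) • (1 - A) := by
      have h : (1 - A) * (1 - A) = 1 - A - (A - A * A) := by noncomm_ring
      rw [h, hAA]; module
    rw [hQdef, smul_mul_smul_comm, h1]; module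
  have hPQ : P * Q = 0 := by
    have h1 : (1 + A) * (1 - A) = 1 - A * A := by noncomm_ring
    rw [hPdef, hQdef, smul_mul_smul_comm, h1, hAA, sub_self, smul_zero]
  have hPQsum : P + Q = 1 := by rw [hPdef, hQdef]; module
  have hsplit : x • (A * B) = P * (x • B) + Q * ((-x) • B) := by
    rw [hPdef, hQdef, smul_mul_assoc, smul_mul_assoc, mul_smul_comm, mul_smul_comm,
      add_mul, sub_mul, one_mul]
    module
  have ePx : P * (x • B) = ((1/2 : ℂ) * x) • ((1 + A) * B) := by
    rw [hPdef, smul_mul_assoc, mul_smul_comm, smul_smul]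
  have eQx : Q * ((-x) • B) = ((1/2 : ℂ) * (-x)) • ((1 - A) * B) := by
    rw [hQdef, smul_mul_assoc, mul_smul_comm, smul_smul]
  have c0 : Commute ((1 + A) * B) ((1 - A) * B) :=
    (cuv.mul_right cuB).mul_left ((cvB.symm).mul_right (Commute.refl B))
  have ccomm : Commute (P * (x • B)) (Q * ((-x) • B)) := by
    rw [ePx, eQx]; exact (c0.smul_left _).smul_right _
  have cQxB : Commute Q (x • B) := (cvB.smul_left _).smul_right _
  have cQE : Commute Q (exp (x • B)) := cQxB.exp_right
  set E := exp (x • B) with hE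
  set F := exp ((-x) • B) with hF
  have cQE1 : Q * (E - 1) = (E - 1) * Q := (cQE.sub_right (Commute.one_right Q)).eq
  calc exp (x • (A * B)) = exp (P * (x • B) + Q * ((-x) • B)) := by rw [hsplit]
    _ = exp (P * (x • B)) * exp (Q * ((-x) • B)) := Matrix.exp_add_of_commute _ _ ccomm
    _ = (1 + P * (E - 1)) * (1 + Q * (F - 1)) := by
        exact congrArg₂ (· * ·) (exp_proj_mul' P _ hPP cPB.eq) (exp_proj_mul' Q _ hQQ cQB.eq)
    _ = 1 + P * (E - 1) + Q * (F - 1) + P * ((E - 1) * Q) * (F - 1) := by noncomm_ring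
    _ = 1 + P * (E - 1) + Q * (F - 1) + (P * Q) * ((E - 1) * (F - 1)) := by
        rw [← cQE1]; noncomm_ring
    _ = P * E + Q * F + (1 - (P + Q)) := by rw [hPQ]; noncomm_ring
    _ = P * E + Q * F := by rw [hPQsum]; simp

lemma kron_Z {n : ℕ} (B : Matrix (Fin n) (Fin n) ℂ) :
    B ⊗ₖ pauliZ = blockDiagonal ![B, -B] := by
  ext ⟨i, a⟩ ⟨j, b⟩
  fin_cases a <;> fin_cases b <;>
    simp [pauliZ, blockDiagonal_apply, kroneckerMap_apply, Fin.ext_iff]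

lemma exp_kron_Z {n : ℕ} (B : Matrix (Fin n) (Fin n) ℂ) (c : ℂ) :
    exp (c • (B ⊗ₖ pauliZ)) =
      blockDiagonal ![exp (c • B), exp ((-c) • B)] := by
  letI : SeminormedRing (Matrix (Fin n) (Fin n) ℂ) := Matrix.linftyOpSemiNormedRing
  letI : NormedRing (Matrix (Fin n) (Fin n) ℂ) := Matrix.linftyOpNormedRing
  letI : NormedAlgebra ℂ (Matrix (Fin n) (Fin n) ℂ) := Matrix.linftyOpNormedAlgebra
  rw [kron_Z]
  have h1 : c • ![B, -B] = ![c • B, (-c) • B] := by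
    funext i; fin_cases i <;> simp
  rw [← blockDiagonal_smul, h1, Matrix.exp_blockDiagonal]
  have h2 : exp ![c • B, (-c) • B] = ![exp (c • B), exp ((-c) • B)] := by
    letI : NormedAlgebra ℚ (Matrix (Fin n) (Fin n) ℂ) := NormedAlgebra.restrictScalars ℚ ℂ _
    funext i; fin_cases i <;> exact Pi.coe_exp _ _
  rw [h2]

lemma triple_apply {n : ℕ} (E F : Fin 2 → Matrix (Fin n) (Fin n) ℂ)
    (ρ : Matrix (Fin n) (Fin n) ℂ) (P : Matrix (Fin 2) (Fin 2) ℂ)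
    (i j : Fin n) (a b : Fin 2) :
    (blockDiagonal E * (ρ ⊗ₖ P) * blockDiagonal F) (i, a) (j, b) =
      P a b * (E a * ρ * F b) i j := by
  simp only [mul_apply, blockDiagonal_apply, kroneckerMap_apply, Fintype.sum_prod_type]
  simp only [ite_mul, mul_ite, zero_mul, mul_zero, Finset.sum_ite_eq, Finset.sum_ite_eq',
    Finset.mem_univ, if_true]
  simp only [Finset.sum_mul, Finset.mul_sum]
  exact Finset.sum_congr rfl fun x _ => Finset.sum_congr rfl fun y _ => by ring

noncomputable def rr : ℂ := ((Real.sqrt 2)⁻¹ : ℝ)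

lemma hrr : rr * rr = 1/2 := by
  rw [rr, ← Complex.ofReal_mul, ← mul_inv, Real.mul_self_sqrt (by norm_num)]
  norm_num

lemma plusProj_apply (a b : Fin 2) : plusProj a b = rr * rr := by
  simp [plusProj, vecMulVec_apply, ketPlus, rr, Complex.conj_ofReal]

lemma ketGamma_zero : ketGamma 0 = ![rr, rr] := by
  funext a; fin_cases a <;> simp [ketGamma, ketPlus, rr]

lemma ketGamma_one : ketGamma 1 = ![rr, -rr] := by
  funext a; fin_cases a <;>
    simp [ketGamma, ketPlus, rr, pauliZ, mulVec, dotProduct, Fin.sum_univ_two]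

lemma contract_zero {n : ℕ} (E F : Fin 2 → Matrix (Fin n) (Fin n) ℂ)
    (ρ : Matrix (Fin n) (Fin n) ℂ) :
    ancillaContract (ketGamma 0) (blockDiagonal E * (ρ ⊗ₖ plusProj) * blockDiagonal F) =
      (1/4 : ℂ) • ((E 0 + E 1) * ρ * (F 0 + F 1)) := by
  funext i j
  simp only [ancillaContract, triple_apply, plusProj_apply, ketGamma_zero,
    Fin.sum_univ_two, Matrix.smul_apply, Matrix.add_mul, Matrix.mul_add, Matrix.add_apply,
    Matrix.cons_val_zero, Matrix.cons_val_one, Matrix.head_cons, smul_eq_mul,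
    Complex.star_def]
  have h := hrr
  set x00 := (E 0 * ρ * F 0) i j; set x01 := (E 0 * ρ * F 1) i j
  set x10 := (E 1 * ρ * F 0) i j; set x11 := (E 1 * ρ * F 1) i j
  rw [show (starRingEnd ℂ) rr = rr by rw [rr, Complex.conj_ofReal]]
  linear_combination ((x00 + x01 + x10 + x11) * (rr * rr + 1/2)) * h

lemma contract_one {n : ℕ} (E F : Fin 2 → Matrix (Fin n) (Fin n) ℂ)
    (ρ : Matrix (Fin n) (Fin n) ℂ) :
    ancillaContract (ketGamma 1) (blockDiagonal E * (ρ ⊗ₖ plusProj) * blockDiagonal F) =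
      (1/4 : ℂ) • ((E 0 - E 1) * ρ * (F 0 - F 1)) := by
  funext i j
  simp only [ancillaContract, triple_apply, plusProj_apply, ketGamma_one,
    Fin.sum_univ_two, Matrix.smul_apply, Matrix.sub_mul, Matrix.mul_sub, Matrix.sub_apply,
    Matrix.cons_val_zero, Matrix.cons_val_one, Matrix.head_cons, smul_eq_mul,
    Complex.star_def, map_neg]
  have h := hrr
  set x00 := (E 0 * ρ * F 0) i j; set x01 := (E 0 * ρ * F 1) i j
  set x10 := (E 1 * ρ * F 0) i j; set x11 := (E 1 * ρ * F 1) i j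
  rw [show (starRingEnd ℂ) rr = rr by rw [rr, Complex.conj_ofReal]]
  linear_combination ((x00 - x01 - x10 + x11) * (rr * rr + 1/2)) * h

lemma final_alg {n : ℕ} (A e0 e1 ρ : Matrix (Fin n) (Fin n) ℂ)
    (h0 : A * e0 = e0 * A) (h1 : A * e1 = e1 * A) :
    (1/2 : ℂ) • ((((1/2:ℂ)•(1+A))*e0 + ((1/2:ℂ)•(1-A))*e1) * ρ *
        ((((1/2:ℂ)•(1+A))*e1 + ((1/2:ℂ)•(1-A))*e0)) +
      ((((1/2:ℂ)•(1+A))*e1 + ((1/2:ℂ)•(1-A))*e0) * ρ *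
        ((((1/2:ℂ)•(1+A))*e0 + ((1/2:ℂ)•(1-A))*e1)))) =
    (1/4:ℂ) • ((e0+e1)*ρ*(e1+e0)) + A * ((1/4:ℂ) • ((e0-e1)*ρ*(e1-e0))) * A := by
  set S := e0 + e1 with hS
  set T := e0 - e1 with hT
  have hAT : A * T = T * A := by rw [hT, mul_sub, sub_mul, h0, h1]
  have hG : ((1/2:ℂ)•(1+A))*e0 + ((1/2:ℂ)•(1-A))*e1 = (1/2:ℂ) • (S + A * T) := by
    simp only [smul_mul_assoc, add_mul, sub_mul, one_mul, hS, hT, mul_sub, mul_add]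
    module
  have hG' : ((1/2:ℂ)•(1+A))*e1 + ((1/2:ℂ)•(1-A))*e0 = (1/2:ℂ) • (S - A * T) := by
    simp only [smul_mul_assoc, add_mul, sub_mul, one_mul, hS, hT, mul_sub, mul_add]
    module
  have hUU : (A*T)*ρ*(A*T) = -(A*((T*ρ*(e1-e0)))*A) := by
    nth_rewrite 2 [hAT]
    rw [show e1 - e0 = -T by rw [hT]; abel]
    noncomm_ring
  have expand : (S + A*T)*ρ*(S - A*T) + (S - A*T)*ρ*(S + A*T) =
      (S*ρ*S + S*ρ*S) - ((A*T)*ρ*(A*T) + (A*T)*ρ*(A*T)) := by noncomm_ring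
  rw [hG, hG']
  rw [show e1 + e0 = S by rw [hS]; abel]
  simp only [smul_mul_assoc, mul_smul_comm, smul_smul]
  rw [← smul_add, expand, hUU]
  module

theorem stmt_5 {n : ℕ} (A B ρ : Matrix (Fin n) (Fin n) ℂ) (hA : A.IsHermitian)
    (hB : B.IsHermitian) (hAB : A * B = B * A) (hA2 : A ^ 2 = 1) (t : ℝ) (ht : 0 ≤ t) :
    (1/2 : ℂ) • (∑ s : Bool,
        exp (((if s then 1 else -1 : ℂ) * Complex.I * (Real.sqrt t : ℂ)) • (A * B)) * ρ *
          exp ((-((if s then 1 else -1 : ℂ) * Complex.I * (Real.sqrt t : ℂ))) • (A * B))) =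
      ∑ γ : Fin 2, (A ^ (γ : ℕ)) *
        ancillaContract (ketGamma γ)
          (exp ((Complex.I * (Real.sqrt t : ℂ)) • (B ⊗ₖ pauliZ)) * (ρ ⊗ₖ plusProj) *
            exp ((-(Complex.I * (Real.sqrt t : ℂ))) • (B ⊗ₖ pauliZ))) *
        (A ^ (γ : ℕ)) := by
  letI : SeminormedRing (Matrix (Fin n) (Fin n) ℂ) := Matrix.linftyOpSemiNormedRing
  letI : NormedRing (Matrix (Fin n) (Fin n) ℂ) := Matrix.linftyOpNormedRing
  letI : NormedAlgebra ℂ (Matrix (Fin n) (Fin n) ℂ) := Matrix.linftyOpNormedAlgebra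
  have cAB : Commute A B := hAB
  rw [Fintype.sum_bool, Fin.sum_univ_two]
  simp only [if_true, Bool.false_eq_true, if_false, one_mul, mul_one, neg_mul, neg_neg,
    Fin.isValue, Fin.val_zero, Fin.val_one, pow_zero, pow_one]
  set c : ℂ := Complex.I * (Real.sqrt t : ℂ) with hc
  have cA0 : A * exp (c • B) = exp (c • B) * A := ((cAB.smul_right c).exp_right).eq
  have cA1 : A * exp ((-c) • B) = exp ((-c) • B) * A :=
    ((cAB.smul_right (-c)).exp_right).eq
  rw [exp_kron_Z B c, exp_kron_Z B (-c), neg_neg]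
  rw [contract_zero ![exp (c • B), exp ((-c) • B)] ![exp ((-c) • B), exp (c • B)] ρ,
    contract_one ![exp (c • B), exp ((-c) • B)] ![exp ((-c) • B), exp (c • B)] ρ]
  simp only [Matrix.cons_val_zero, Matrix.cons_val_one, Matrix.head_cons]
  rw [exp_decomp A B hAB hA2 c, exp_decomp A B hAB hA2 (-c), neg_neg]
  exact final_alg A (exp (c • B)) (exp ((-c) • B)) ρ cA0 cA1
end

section
/- Let A, B be n×n complex matrices with A Hermitian, A² = I, B Hermitian, and [A,B] = 0, and let ρ_A, ρ_B be density matrices on the respective factors of a bipartite system where A acts on the first factor and B on the second. Define E(ρ) = ½ Σ_{s=±1} e^{is√t A⊗B} ρ e^{-is√t A⊗B}. Then the partial trace over the second factor satisfies Tr_B(E(ρ_A ⊗ ρ_B)) = p₀ ρ_A + p₁ A ρ_A A, where p_γ = Tr(e^{i√t Z⊗B}(|+⟩⟨+| ⊗ ρ_B)e^{-i√t Z⊗B} (|γ⟩⟨γ| ⊗ I)), and moreover p₀, p₁ ≥ 0 and p₀ + p₁ = 1. -/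
open Matrix NormedSpace Kronecker
open scoped ComplexOrder


lemma exp_idem_mul {𝔸 : Type*} [NormedRing 𝔸] [NormedAlgebra ℂ 𝔸] [CompleteSpace 𝔸]
    (p z : 𝔸) (hp : p * p = p) (hc : Commute p z) :
    exp (p * z) = 1 + p * (exp z - 1) := by
  have hppow : ∀ k : ℕ, p ^ (k + 1) = p := by
    intro k; induction k with
    | zero => simp
    | succ k ih => rw [pow_succ, ih, hp]
  have hpow : ∀ k : ℕ, (p * z) ^ (k + 1) = p * z ^ (k + 1) := fun k => by
    rw [hc.mul_pow, hppow]
  have key : ∀ w : 𝔸, exp w = 1 + ∑' k : ℕ, ((Nat.factorial (k+1) : ℕ) : ℂ)⁻¹ • w ^ (k + 1) := by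
    intro w
    have hs : Summable fun k : ℕ => ((Nat.factorial k : ℕ) : ℂ)⁻¹ • w ^ k := expSeries_summable' w
    rw [exp_eq_tsum ℂ]
    show ∑' n : ℕ, ((Nat.factorial n:ℕ):ℂ)⁻¹ • w ^ n = _
    rw [hs.tsum_eq_zero_add]
    norm_num
  rw [key, key z]
  have hsz : Summable fun k : ℕ => ((Nat.factorial (k+1) : ℕ) : ℂ)⁻¹ • z ^ (k + 1) :=
    ((expSeries_summable' (𝕂 := ℂ) z).comp_injective Nat.succ_injective :)
  have h2 : ∑' k : ℕ, ((Nat.factorial (k+1) : ℕ) : ℂ)⁻¹ • (p*z) ^ (k + 1)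
      = ∑' k : ℕ, p * (((Nat.factorial (k+1) : ℕ) : ℂ)⁻¹ • z ^ (k + 1)) := by
    congr 1; funext k; rw [hpow, mul_smul_comm]
  rw [h2, hsz.tsum_mul_left p, add_sub_cancel_left]

/-- `X ↦ 1 ⊗ₖ X` as an algebra homomorphism. -/
noncomputable def kroneckerRightAlgHom (k m : ℕ) :
    Matrix (Fin m) (Fin m) ℂ →ₐ[ℂ] Matrix (Fin k × Fin m) (Fin k × Fin m) ℂ :=
  AlgHom.ofLinearMap
    { toFun := fun X => (1 : Matrix (Fin k) (Fin k) ℂ) ⊗ₖ X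
      map_add' := fun X Y => Matrix.kronecker_add _ _ _
      map_smul' := fun r X => Matrix.kronecker_smul r _ _ }
    Matrix.one_kronecker_one
    (fun X Y => by
      show (1 : Matrix (Fin k) (Fin k) ℂ) ⊗ₖ (X * Y) =
        ((1 : Matrix (Fin k) (Fin k) ℂ) ⊗ₖ X) * ((1 : Matrix (Fin k) (Fin k) ℂ) ⊗ₖ Y)
      rw [← Matrix.mul_kronecker_mul, Matrix.one_mul])

lemma exp_one_kronecker {k m : ℕ} (X : Matrix (Fin m) (Fin m) ℂ) :
    exp ((1 : Matrix (Fin k) (Fin k) ℂ) ⊗ₖ X) = 1 ⊗ₖ exp X := by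
  letI : SeminormedRing (Matrix (Fin m) (Fin m) ℂ) := Matrix.linftyOpSemiNormedRing
  letI : NormedRing (Matrix (Fin m) (Fin m) ℂ) := Matrix.linftyOpNormedRing
  letI : NormedAlgebra ℂ (Matrix (Fin m) (Fin m) ℂ) := Matrix.linftyOpNormedAlgebra
  letI : SeminormedRing (Matrix (Fin k × Fin m) (Fin k × Fin m) ℂ) :=
    Matrix.linftyOpSemiNormedRing
  letI : NormedRing (Matrix (Fin k × Fin m) (Fin k × Fin m) ℂ) := Matrix.linftyOpNormedRing
  letI : NormedAlgebra ℂ (Matrix (Fin k × Fin m) (Fin k × Fin m) ℂ) :=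
    Matrix.linftyOpNormedAlgebra
  letI : NormedAlgebra ℚ (Matrix (Fin m) (Fin m) ℂ) := Matrix.linftyOpNormedAlgebra
  letI : NormedAlgebra ℚ (Matrix (Fin k × Fin m) (Fin k × Fin m) ℂ) :=
    Matrix.linftyOpNormedAlgebra
  exact (map_exp (kroneckerRightAlgHom k m)
    (LinearMap.continuous_of_finiteDimensional (kroneckerRightAlgHom k m).toLinearMap) X).symm

lemma exp_kron_invol {k m : ℕ} (M : Matrix (Fin k) (Fin k) ℂ) (hM : M * M = 1)
    (c : ℂ) (B : Matrix (Fin m) (Fin m) ℂ) :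
    exp (c • (M ⊗ₖ B)) =
      ((1/2 : ℂ) • (1 + M)) ⊗ₖ exp (c • B) + ((1/2 : ℂ) • (1 - M)) ⊗ₖ exp ((-c) • B) := by
  set P : Matrix (Fin k) (Fin k) ℂ := (1/2 : ℂ) • (1 + M) with hPdef
  set Q : Matrix (Fin k) (Fin k) ℂ := (1/2 : ℂ) • (1 - M) with hQdef
  have hP : P * P = P := by
    simp only [hPdef, smul_mul_assoc, mul_smul_comm, mul_add, add_mul, one_mul, mul_one, hM,
      smul_smul]
    module
  have hQ : Q * Q = Q := by
    simp only [hQdef, smul_mul_assoc, mul_smul_comm, mul_sub, sub_mul, one_mul, mul_one, hM,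
      smul_smul]
    module
  have hPQ : P * Q = 0 := by
    simp only [hPdef, hQdef, smul_mul_assoc, mul_smul_comm, mul_sub, sub_mul, mul_add, add_mul,
      one_mul, mul_one, hM, smul_smul]
    module
  have hQP : Q * P = 0 := by
    simp only [hPdef, hQdef, smul_mul_assoc, mul_smul_comm, mul_sub, sub_mul, mul_add, add_mul,
      one_mul, mul_one, hM, smul_smul]
    module
  have hPmQ : P - Q = M := by
    simp only [hPdef, hQdef]; module
  have hPQ1 : P + Q = 1 := by
    simp only [hPdef, hQdef]; module
  have key : c • (M ⊗ₖ B) = (c • (P ⊗ₖ B)) + ((-c) • (Q ⊗ₖ B)) := by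
    have hsub : M ⊗ₖ B = P ⊗ₖ B - Q ⊗ₖ B := by
      rw [← hPmQ]
      ext ij kl
      simp [Matrix.kroneckerMap_apply, Matrix.sub_apply, sub_mul]
    rw [hsub, smul_sub, sub_eq_add_neg, ← neg_smul]
  have hcomm : Commute (c • (P ⊗ₖ B)) ((-c) • (Q ⊗ₖ B)) := by
    have h1 : (P ⊗ₖ B) * (Q ⊗ₖ B) = 0 := by
      rw [← Matrix.mul_kronecker_mul, hPQ, Matrix.zero_kronecker]
    have h2 : (Q ⊗ₖ B) * (P ⊗ₖ B) = 0 := by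
      rw [← Matrix.mul_kronecker_mul, hQP, Matrix.zero_kronecker]
    show _ = _
    rw [smul_mul_assoc, mul_smul_comm, smul_mul_assoc, mul_smul_comm, h1, h2]
    simp
  rw [key, Matrix.exp_add_of_commute _ _ hcomm]
  -- compute each exponential
  have idem : ∀ (R : Matrix (Fin k) (Fin k) ℂ), R * R = R → ∀ d : ℂ,
      exp (d • (R ⊗ₖ B)) = 1 + (R ⊗ₖ (1 : Matrix (Fin m) (Fin m) ℂ)) *
        ((1 : Matrix (Fin k) (Fin k) ℂ) ⊗ₖ exp (d • B) - 1) := by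
    intro R hR d
    have hd : d • (R ⊗ₖ B) = (R ⊗ₖ (1 : Matrix (Fin m) (Fin m) ℂ)) *
        ((1 : Matrix (Fin k) (Fin k) ℂ) ⊗ₖ (d • B)) := by
      rw [← Matrix.mul_kronecker_mul, Matrix.mul_one, Matrix.one_mul, Matrix.kronecker_smul]
    rw [hd]
    letI : SeminormedRing (Matrix (Fin k × Fin m) (Fin k × Fin m) ℂ) :=
      Matrix.linftyOpSemiNormedRing
    letI : NormedRing (Matrix (Fin k × Fin m) (Fin k × Fin m) ℂ) := Matrix.linftyOpNormedRing
    letI : NormedAlgebra ℂ (Matrix (Fin k × Fin m) (Fin k × Fin m) ℂ) :=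
      Matrix.linftyOpNormedAlgebra
    erw [exp_idem_mul _ _ (by rw [← Matrix.mul_kronecker_mul, hR, Matrix.one_mul])
      (by show _ = _
          rw [← Matrix.mul_kronecker_mul, ← Matrix.mul_kronecker_mul]
          rw [Matrix.mul_one, Matrix.one_mul, Matrix.mul_one, Matrix.one_mul])]
    erw [exp_one_kronecker]
  rw [idem P hP c, idem Q hQ (-c)]
  -- expand the product
  have e1 : (P ⊗ₖ (1 : Matrix (Fin m) (Fin m) ℂ)) *
      ((1 : Matrix (Fin k) (Fin k) ℂ) ⊗ₖ exp (c • B)) = P ⊗ₖ exp (c • B) := by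
    rw [← Matrix.mul_kronecker_mul, Matrix.mul_one, Matrix.one_mul]
  have e2 : (Q ⊗ₖ (1 : Matrix (Fin m) (Fin m) ℂ)) *
      ((1 : Matrix (Fin k) (Fin k) ℂ) ⊗ₖ exp ((-c) • B)) = Q ⊗ₖ exp ((-c) • B) := by
    rw [← Matrix.mul_kronecker_mul, Matrix.mul_one, Matrix.one_mul]
  have e7 : P ⊗ₖ (1 : Matrix (Fin m) (Fin m) ℂ) + Q ⊗ₖ (1 : Matrix (Fin m) (Fin m) ℂ) = 1 := by
    rw [← Matrix.add_kronecker, hPQ1, Matrix.one_kronecker_one]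
  rw [mul_sub, mul_one, e1, mul_sub, mul_one, e2]
  rw [add_mul, one_mul, mul_add, mul_one, mul_sub]
  have e3 : (P ⊗ₖ exp (c • B) - P ⊗ₖ (1 : Matrix (Fin m) (Fin m) ℂ)) *
      (Q ⊗ₖ exp ((-c) • B)) = 0 := by
    rw [sub_mul, ← Matrix.mul_kronecker_mul, ← Matrix.mul_kronecker_mul, hPQ,
      Matrix.zero_kronecker, Matrix.zero_kronecker, sub_zero]
  have e4 : (P ⊗ₖ exp (c • B) - P ⊗ₖ (1 : Matrix (Fin m) (Fin m) ℂ)) *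
      (Q ⊗ₖ (1 : Matrix (Fin m) (Fin m) ℂ)) = 0 := by
    rw [sub_mul, ← Matrix.mul_kronecker_mul, ← Matrix.mul_kronecker_mul, hPQ,
      Matrix.zero_kronecker, Matrix.zero_kronecker, sub_zero]
  rw [e3, e4]
  rw [← e7]
  abel

/-- `|v⟩⟨v|` as a matrix. -/
noncomputable def projOf (v : Fin 2 → ℂ) : Matrix (Fin 2) (Fin 2) ℂ :=
  vecMulVec v (fun j => star (v j))

/-- Partial trace over the second tensor factor. -/
noncomputable def ptraceSnd {n m : ℕ} (M : Matrix (Fin n × Fin m) (Fin n × Fin m) ℂ) :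
    Matrix (Fin n) (Fin n) ℂ :=
  fun i j => ∑ a : Fin m, M (i, a) (j, a)


lemma half_lemma : ((Real.sqrt 2 : ℝ) : ℂ)⁻¹ * ((Real.sqrt 2 : ℝ) : ℂ)⁻¹ = 2⁻¹ := by
  rw [← mul_inv, ← Complex.ofReal_mul, Real.mul_self_sqrt (le_of_lt two_pos)]
  norm_num

lemma pauliZ_sq : pauliZ * pauliZ = 1 := by
  ext i j
  fin_cases i <;> fin_cases j <;>
    simp [pauliZ, Matrix.mul_apply, Fin.sum_univ_two, Matrix.one_apply]

lemma hPzM : (1/2 : ℂ) • (1 + pauliZ) = !![1,0;0,0] := by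
  ext i j
  fin_cases i <;> fin_cases j <;> norm_num [pauliZ, Matrix.one_apply]

lemma hQzM : (1/2 : ℂ) • (1 - pauliZ) = !![0,0;0,1] := by
  ext i j
  fin_cases i <;> fin_cases j <;> norm_num [pauliZ, Matrix.one_apply]

lemma hPlusM : projOf ketPlus = !![1/2,1/2;1/2,1/2] := by
  ext i j
  fin_cases i <;> fin_cases j <;>
    simp [projOf, ketPlus, vecMulVec_apply, Complex.star_def, Complex.conj_ofReal, half_lemma]

lemma hGam0M : projOf (ketGamma 0) = !![1/2,1/2;1/2,1/2] := by
  rw [show ketGamma 0 = ketPlus by simp [ketGamma], hPlusM]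

lemma hGam1M : projOf (ketGamma 1) = !![1/2,-(1/2);-(1/2),1/2] := by
  ext i j
  fin_cases i <;> fin_cases j <;>
    simp [projOf, ketGamma, ketPlus, pauliZ, vecMulVec_apply, Matrix.mulVec, dotProduct,
      Fin.sum_univ_two, Complex.star_def, Complex.conj_ofReal, half_lemma]

lemma ptraceSnd_kron {n m : ℕ} (X : Matrix (Fin n) (Fin n) ℂ) (Y : Matrix (Fin m) (Fin m) ℂ) :
    ptraceSnd (X ⊗ₖ Y) = Y.trace • X := by
  ext i j
  simp [ptraceSnd, Matrix.kroneckerMap_apply, Matrix.trace, Matrix.diag, Finset.sum_mul,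
    Finset.mul_sum, mul_comm]

lemma ptraceSnd_add {n m : ℕ} (X Y : Matrix (Fin n × Fin m) (Fin n × Fin m) ℂ) :
    ptraceSnd (X + Y) = ptraceSnd X + ptraceSnd Y := by
  ext i j
  simp [ptraceSnd, Finset.sum_add_distrib]

lemma ptraceSnd_smul {n m : ℕ} (a : ℂ) (X : Matrix (Fin n × Fin m) (Fin n × Fin m) ℂ) :
    ptraceSnd (a • X) = a • ptraceSnd X := by
  ext i j
  simp [ptraceSnd, Finset.mul_sum]

lemma trace_nonneg_psd {k : ℕ} {M : Matrix (Fin k) (Fin k) ℂ} (h : M.PosSemidef) :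
    (0 : ℂ) ≤ M.trace := by
  rw [Matrix.trace]
  refine Finset.sum_nonneg fun i _ => ?_
  have h2 := (posSemidef_iff_dotProduct_mulVec.mp h).2 (Pi.single i 1)
  simpa [Matrix.mulVec_single, dotProduct, Pi.single_apply, Matrix.diag] using h2

theorem stmt_6 {n m : ℕ} (A : Matrix (Fin n) (Fin n) ℂ) (B : Matrix (Fin m) (Fin m) ℂ)
    (hA : A.IsHermitian) (hA2 : A ^ 2 = 1) (hB : B.IsHermitian)
    (ρA : Matrix (Fin n) (Fin n) ℂ) (ρB : Matrix (Fin m) (Fin m) ℂ)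
    (hρA : ρA.PosSemidef ∧ ρA.trace = 1) (hρB : ρB.PosSemidef ∧ ρB.trace = 1)
    (t : ℝ) (ht : 0 ≤ t) :
    ∃ p : Fin 2 → ℝ, (∀ γ, 0 ≤ p γ) ∧ p 0 + p 1 = 1 ∧
      (∀ γ : Fin 2, (p γ : ℂ) =
        (exp ((Complex.I * (Real.sqrt t : ℂ)) • (pauliZ ⊗ₖ B)) *
            ((projOf ketPlus) ⊗ₖ ρB) *
            exp ((-(Complex.I * (Real.sqrt t : ℂ))) • (pauliZ ⊗ₖ B)) *
            ((projOf (ketGamma γ)) ⊗ₖ (1 : Matrix (Fin m) (Fin m) ℂ))).trace) ∧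
      ptraceSnd ((1/2 : ℂ) • (∑ s : Bool,
          exp (((if s then 1 else -1 : ℂ) * Complex.I * (Real.sqrt t : ℂ)) • (A ⊗ₖ B)) *
            (ρA ⊗ₖ ρB) *
            exp ((-((if s then 1 else -1 : ℂ) * Complex.I * (Real.sqrt t : ℂ))) • (A ⊗ₖ B)))) =
        (p 0 : ℂ) • ρA + (p 1 : ℂ) • (A * ρA * A) := by
  obtain ⟨hρApsd, hρAtr⟩ := hρA
  obtain ⟨hρBpsd, hρBtr⟩ := hρB
  have hA2' : A * A = 1 := by rw [← sq]; exact hA2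
  set θ : ℝ := Real.sqrt t with hθdef
  set c : ℂ := Complex.I * (θ : ℂ) with hc
  -- basic facts about the B-exponentials
  have hcommB : Commute (c • B) ((-c) • B) :=
    (((Commute.refl B).smul_left c).smul_right (-c))
  have hEpEm : exp (c • B) * exp ((-c) • B) = 1 := by
    rw [← Matrix.exp_add_of_commute _ _ hcommB, neg_smul, add_neg_cancel, exp_zero]
  have hEmEp : exp ((-c) • B) * exp (c • B) = 1 := by
    rw [← Matrix.exp_add_of_commute _ _ hcommB.symm, neg_smul, neg_add_cancel, exp_zero]
  have hstar : star c = -c := by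
    simp [hc, Complex.ext_iff]
  have hadj : (exp (c • B))ᴴ = exp ((-c) • B) := by
    rw [← Matrix.exp_conjTranspose, Matrix.conjTranspose_smul, hB.eq, hstar]
  have hadj' : (exp ((-c) • B))ᴴ = exp (c • B) := by
    rw [← hadj, conjTranspose_conjTranspose]
  have hT1 : (exp (c • B) * ρB * exp ((-c) • B)).trace = 1 := by
    rw [Matrix.trace_mul_cycle, hEmEp, Matrix.one_mul, hρBtr]
  have hT2 : (exp ((-c) • B) * ρB * exp (c • B)).trace = 1 := by
    rw [Matrix.trace_mul_cycle, hEpEm, Matrix.one_mul, hρBtr]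
  -- the probabilities as complex numbers
  have hCmH : ((1/2 : ℂ) • (exp (c • B) + exp ((-c) • B)))ᴴ
      = (1/2 : ℂ) • (exp (c • B) + exp ((-c) • B)) := by
    rw [Matrix.conjTranspose_smul, Matrix.conjTranspose_add, hadj, hadj']
    rw [show star (1/2 : ℂ) = (1/2 : ℂ) by norm_num, add_comm]
  have hSmH : ((1/2 : ℂ) • (exp (c • B) - exp ((-c) • B)))ᴴ
      = (1/2 : ℂ) • (exp ((-c) • B) - exp (c • B)) := by
    rw [Matrix.conjTranspose_smul, Matrix.conjTranspose_sub, hadj, hadj']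
    rw [show star (1/2 : ℂ) = (1/2 : ℂ) by norm_num]
  have h0le : (0 : ℂ) ≤ ((1/2 : ℂ) • (exp (c • B) + exp ((-c) • B)) * ρB *
      ((1/2 : ℂ) • (exp (c • B) + exp ((-c) • B)))ᴴ).trace :=
    trace_nonneg_psd (hρBpsd.mul_mul_conjTranspose_same _)
  have h1le : (0 : ℂ) ≤ ((1/2 : ℂ) • (exp (c • B) - exp ((-c) • B)) * ρB *
      ((1/2 : ℂ) • (exp (c • B) - exp ((-c) • B)))ᴴ).trace :=
    trace_nonneg_psd (hρBpsd.mul_mul_conjTranspose_same _)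
  set p0 : ℂ := ((1/2 : ℂ) • (exp (c • B) + exp ((-c) • B)) * ρB *
      ((1/2 : ℂ) • (exp (c • B) + exp ((-c) • B)))ᴴ).trace with hp0def
  set p1 : ℂ := ((1/2 : ℂ) • (exp (c • B) - exp ((-c) • B)) * ρB *
      ((1/2 : ℂ) • (exp (c • B) - exp ((-c) • B)))ᴴ).trace with hp1def
  have hp0e : p0 = (1/4) * ((exp (c • B) * ρB * exp (c • B)).trace
      + (exp ((-c) • B) * ρB * exp ((-c) • B)).trace + 2) := by
    rw [hp0def, hCmH]
    simp only [Matrix.smul_mul, Matrix.mul_smul, Matrix.trace_smul, mul_add, add_mul,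
      Matrix.trace_add, smul_eq_mul]
    rw [hT1, hT2]
    ring
  have hp1e : p1 = (1/4) * (2 - (exp (c • B) * ρB * exp (c • B)).trace
      - (exp ((-c) • B) * ρB * exp ((-c) • B)).trace) := by
    rw [hp1def, hSmH]
    simp only [Matrix.smul_mul, Matrix.mul_smul, Matrix.trace_smul, mul_sub, sub_mul,
      Matrix.trace_sub, smul_eq_mul]
    rw [hT1, hT2]
    ring
  have him0 : p0.im = 0 := by
    have h := (Complex.le_def.mp h0le).2
    simpa using h.symm
  have him1 : p1.im = 0 := by
    have h := (Complex.le_def.mp h1le).2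
    simpa using h.symm
  have hre0 : ((p0.re : ℝ) : ℂ) = p0 := Complex.ext (by simp) (by simp [him0])
  have hre1 : ((p1.re : ℝ) : ℂ) = p1 := Complex.ext (by simp) (by simp [him1])
  have hsum : p0 + p1 = 1 := by rw [hp0e, hp1e]; ring
  refine ⟨![p0.re, p1.re], ?_, ?_, ?_, ?_⟩
  · -- nonnegativity
    intro γ
    fin_cases γ
    · simpa using (Complex.le_def.mp h0le).1
    · simpa using (Complex.le_def.mp h1le).1
  · -- sum to one
    have := congrArg Complex.re hsum
    simpa using this
  · -- the trace formulas
    intro γ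
    have hexpZ : exp (c • (pauliZ ⊗ₖ B)) =
        !![(1:ℂ),0;0,0] ⊗ₖ exp (c • B) + !![(0:ℂ),0;0,1] ⊗ₖ exp ((-c) • B) := by
      rw [exp_kron_invol pauliZ pauliZ_sq c B, hPzM, hQzM]
    have hexpZ' : exp ((-c) • (pauliZ ⊗ₖ B)) =
        !![(1:ℂ),0;0,0] ⊗ₖ exp ((-c) • B) + !![(0:ℂ),0;0,1] ⊗ₖ exp (c • B) := by
      rw [exp_kron_invol pauliZ pauliZ_sq (-c) B, hPzM, hQzM, neg_neg]
    have hA0 : ((p0.re : ℝ) : ℂ) = (exp (c • (pauliZ ⊗ₖ B)) * ((projOf ketPlus) ⊗ₖ ρB) *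
        exp ((-c) • (pauliZ ⊗ₖ B)) *
        ((projOf (ketGamma 0)) ⊗ₖ (1 : Matrix (Fin m) (Fin m) ℂ))).trace := by
      rw [hre0, hexpZ, hexpZ', hPlusM, hGam0M]
      simp only [add_mul, mul_add]
      simp only [← Matrix.mul_kronecker_mul]
      simp only [Matrix.trace_add, Matrix.trace_kronecker, Matrix.mul_one]
      rw [hT1, hT2, hp0e]
      norm_num [Matrix.trace_fin_two, Matrix.mul_apply, Fin.sum_univ_two]
      ring
    have hA1 : ((p1.re : ℝ) : ℂ) = (exp (c • (pauliZ ⊗ₖ B)) * ((projOf ketPlus) ⊗ₖ ρB) *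
        exp ((-c) • (pauliZ ⊗ₖ B)) *
        ((projOf (ketGamma 1)) ⊗ₖ (1 : Matrix (Fin m) (Fin m) ℂ))).trace := by
      rw [hre1, hexpZ, hexpZ', hPlusM, hGam1M]
      simp only [add_mul, mul_add]
      simp only [← Matrix.mul_kronecker_mul]
      simp only [Matrix.trace_add, Matrix.trace_kronecker, Matrix.mul_one]
      rw [hT1, hT2, hp1e]
      norm_num [Matrix.trace_fin_two, Matrix.mul_apply, Fin.sum_univ_two]
      ring
    fin_cases γ
    · exact hA0
    · exact hA1
  · -- the channel identity
    have hexpA : exp (c • (A ⊗ₖ B)) =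
        ((1/2 : ℂ) • (1 + A)) ⊗ₖ exp (c • B) + ((1/2 : ℂ) • (1 - A)) ⊗ₖ exp ((-c) • B) :=
      exp_kron_invol A hA2' c B
    have hexpA' : exp ((-c) • (A ⊗ₖ B)) =
        ((1/2 : ℂ) • (1 + A)) ⊗ₖ exp ((-c) • B) + ((1/2 : ℂ) • (1 - A)) ⊗ₖ exp (c • B) := by
      rw [exp_kron_invol A hA2' (-c) B, neg_neg]
    rw [Fintype.sum_bool]
    simp only [if_true, if_false, Bool.false_eq_true]
    rw [show (1 : ℂ) * Complex.I * (θ : ℂ) = c by rw [hc]; ring]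
    rw [show (-1 : ℂ) * Complex.I * (θ : ℂ) = -c by rw [hc]; ring]
    rw [neg_neg, hexpA, hexpA']
    simp only [Matrix.cons_val_zero, Matrix.cons_val_one, Matrix.head_cons]
    rw [hre0, hre1]
    simp only [add_mul, mul_add]
    simp only [← Matrix.mul_kronecker_mul]
    simp only [ptraceSnd_smul, ptraceSnd_add, ptraceSnd_kron]
    rw [hT1, hT2, hp0e, hp1e]
    set Pa : Matrix (Fin n) (Fin n) ℂ := (1/2 : ℂ) • (1 + A) with hPa
    set Qa : Matrix (Fin n) (Fin n) ℂ := (1/2 : ℂ) • (1 - A) with hQa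
    have hPQ1 : Pa + Qa = 1 := by rw [hPa, hQa]; module
    have hPmQ : Pa - Qa = A := by rw [hPa, hQa]; module
    set X11 := Pa * ρA * Pa with hX11
    set X12 := Pa * ρA * Qa with hX12
    set X21 := Qa * ρA * Pa with hX21
    set X22 := Qa * ρA * Qa with hX22
    have hρdec : ρA = X11 + X12 + X21 + X22 := by
      calc ρA = (Pa + Qa) * ρA * (Pa + Qa) := by rw [hPQ1, Matrix.one_mul, Matrix.mul_one]
      _ = X11 + X12 + X21 + X22 := by
          rw [hX11, hX12, hX21, hX22]
          simp only [add_mul, mul_add]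
          abel
    have hAdec : A * ρA * A = X11 - X12 - X21 + X22 := by
      calc A * ρA * A = (Pa - Qa) * ρA * (Pa - Qa) := by rw [hPmQ]
      _ = X11 - X12 - X21 + X22 := by
          rw [hX11, hX12, hX21, hX22]
          simp only [sub_mul, mul_sub]
          abel
    conv_rhs => rw [hAdec, hρdec]
    module
end
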